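/- With notation as in the construction of κ (the affine permutation ∑_{i=1}^s t^{νᵢ−1}E_{i,l(i)} + ∑_{i=1}^{n−s} t⁻¹E_{i+s,m(i)}), write κ = τ_q·σ where σ ∈ S_n is the permutation with σ⁻¹(i) = l(i) for i ≤ s and σ⁻¹(i) = m(i−s) for i > s. Then the length of σ in S_n equals ∑_{k'<k} #Row(k)·#Blue(k'), i.e., the number of inversions of σ equals the number of pairs (i,j) with i ∈ Row(k), j ∈ Blue(k'), k' < k. -/

import Mathlib

open Finset

/-- write κ = τ_q·σ, where σ ∈ S_n is the permutation with
σ⁻¹(i) = l(i) for i ≤ s and σ⁻¹(i) = m(i−s) for i > s.  Then the inversion number of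
σ equals ∑_{k'<k} #Row(k)·#Blue(k').  Setup (Row, Red, Blue, l, m, s) as in the paper. -/
theorem length_of_sigma (n r : ℕ) (hr : 0 < r) (lam : Fin r → ℕ)
    (hpos : ∀ i, 0 < lam i) (hsum : ∑ i, lam i = n)
    (d : ℕ → ℕ)
    (hd : ∀ k : ℕ, d k = ∑ j ∈ Finset.univ.filter (fun j : Fin r => (j : ℕ) < k), lam j)
    (Row : ℕ → Finset ℕ) (hRow : ∀ k, Row k = Finset.Ioc (d k) (d (k + 1)))
    (maxprev : ℕ → ℕ)
    (hmp : ∀ k : ℕ, maxprev k = (Finset.univ.filter (fun j : Fin r => (j : ℕ) < k)).sup lam)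
    (Red : ℕ → Finset ℕ) (hRed : ∀ k, Red k = Finset.Ioc (d k) (d (k + 1) - maxprev k))
    (Blue : ℕ → Finset ℕ) (hBlue : ∀ k, Blue k = Row k \ Red k)
    (s : ℕ) (hs : s = Finset.univ.sup lam)
    (rowOf : ℕ → ℕ)
    (hrowOf : ∀ x : ℕ, rowOf x = (Finset.univ.filter (fun k : Fin r => d ((k : ℕ) + 1) < x)).card)
    (l : ℕ → ℕ)
    (hlmono : ∀ i j : ℕ, 1 ≤ i → i < j → j ≤ s → l i < l j)
    (hlrange : (Finset.Icc 1 s).image l = (Finset.range r).biUnion Red)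
    (m : ℕ → ℕ)
    (hminj : ∀ i ∈ Finset.Icc 1 (n - s), ∀ j ∈ Finset.Icc 1 (n - s), m i = m j → i = j)
    (hmrange : (Finset.Icc 1 (n - s)).image m = (Finset.range r).biUnion Blue)
    (hmorder : ∀ i ∈ Finset.Icc 1 (n - s), ∀ j ∈ Finset.Icc 1 (n - s),
      (i < j ↔ (rowOf (m j) < rowOf (m i) ∨ (rowOf (m i) = rowOf (m j) ∧ m i < m j))))
    (σinv : ℕ → ℕ) (hσinv : ∀ i : ℕ, σinv i = if i ≤ s then l i else m (i - s)) :
    (((Finset.Icc 1 n) ×ˢ (Finset.Icc 1 n)).filter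
        (fun p : ℕ × ℕ => p.1 < p.2 ∧ σinv p.2 < σinv p.1)).card
      = ∑ p ∈ (Finset.range r ×ˢ Finset.range r).filter (fun p => p.2 < p.1),
          (Row p.1).card * (Blue p.2).card := by
  classical
  -- basic facts about d
  have hd0 : d 0 = 0 := by rw [hd]; simp
  have hdmono : ∀ {a b : ℕ}, a ≤ b → d a ≤ d b := by
    intro a b hab
    rw [hd, hd]
    exact Finset.sum_le_sum_of_subset
      (Finset.monotone_filter_right _ (fun j _ hj => lt_of_lt_of_le hj hab))
  have hdr : ∀ k, r ≤ k → d k = n := by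
    intro k hk
    rw [hd, Finset.filter_true_of_mem (fun j _ => lt_of_lt_of_le j.isLt hk)]
    exact hsum
  have hsn : s ≤ n := by
    rw [hs]
    refine Finset.sup_le (fun i _ => ?_)
    calc lam i ≤ ∑ j, lam j := Finset.single_le_sum (fun _ _ => Nat.zero_le _) (mem_univ i)
    _ = n := hsum
  -- rows
  have hRowSub : ∀ k, Row k ⊆ Finset.Icc 1 n := by
    intro k x hx
    rw [hRow, mem_Ioc] at hx
    have h1 : d (k + 1) ≤ d (max (k+1) r) := hdmono (le_max_left _ _)
    have h2 : d (max (k+1) r) = n := hdr _ (le_max_right _ _)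
    rw [mem_Icc]; omega
  have hRowlt : ∀ {k k' : ℕ}, k < k' → ∀ x ∈ Row k, ∀ y ∈ Row k', x < y := by
    intro k k' hkk x hx y hy
    rw [hRow, mem_Ioc] at hx hy
    have : d (k + 1) ≤ d k' := hdmono hkk
    omega
  have hRowdisj : ∀ {k k' : ℕ}, k ≠ k' → ∀ x, x ∈ Row k → x ∈ Row k' → False := by
    intro k k' hkk x hx hy
    rcases lt_or_gt_of_ne hkk with h | h
    · exact lt_irrefl x (hRowlt h x hx x hy)
    · exact lt_irrefl x (hRowlt h x hy x hx)
  have hrowOf_eq : ∀ k, ∀ x ∈ Row k, rowOf x = k := by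
    intro k x hx
    rw [hRow, mem_Ioc] at hx
    rw [hrowOf]
    have hset : Finset.univ.filter (fun j : Fin r => d ((j : ℕ) + 1) < x)
        = Finset.univ.filter (fun j : Fin r => (j : ℕ) < k) := by
      ext j
      simp only [mem_filter, mem_univ, true_and]
      constructor
      · intro h
        by_contra hc
        push_neg at hc
        have : d (k + 1) ≤ d ((j : ℕ) + 1) := hdmono (by omega)
        omega
      · intro h
        have : d ((j : ℕ) + 1) ≤ d k := hdmono (by omega)
        omega
    rw [hset]
    -- card of {j : Fin r | j < k} = k ; here k ≤ r since x ∈ Row k nonempty means d k < d (k+1) ≤ n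
    have hkr : k ≤ r := by
      by_contra hc
      push_neg at hc
      have h1 : d k = n := hdr _ (by omega)
      have h2 : d (k + 1) = n := hdr _ (by omega)
      omega
    have himg : (Finset.univ.filter (fun j : Fin r => (j : ℕ) < k)).image (fun j : Fin r => (j : ℕ))
        = Finset.range k := by
      ext a
      simp only [mem_image, mem_filter, mem_univ, true_and, mem_range]
      constructor
      · rintro ⟨j, hj, rfl⟩; exact hj
      · intro ha; exact ⟨⟨a, by omega⟩, ha, rfl⟩
    have := Finset.card_image_of_injective
      (Finset.univ.filter (fun j : Fin r => (j : ℕ) < k)) (Fin.val_injective)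
    rw [himg, Finset.card_range] at this
    exact this.symm
  have hrow_mem : ∀ x, x ∈ Finset.Icc 1 n → rowOf x < r ∧ x ∈ Row (rowOf x) := by
    intro x hx
    rw [mem_Icc] at hx
    have hex : ∃ k, x ≤ d (k + 1) := by
      refine ⟨r - 1, ?_⟩
      rw [show r - 1 + 1 = r by omega, hdr r le_rfl]
      exact hx.2
    set k := Nat.find hex with hk
    have hk2 : x ≤ d (k + 1) := Nat.find_spec hex
    have hk1 : d k < x := by
      rcases Nat.eq_zero_or_pos k with h | h
      · rw [h, hd0]; omega
      · have := Nat.find_min hex (m := k - 1) (by omega)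
        push_neg at this
        rwa [show k - 1 + 1 = k by omega] at this
    have hkr : k < r := by
      by_contra hc
      push_neg at hc
      have : d k = n := hdr _ hc
      omega
    have hxk : x ∈ Row k := by rw [hRow, mem_Ioc]; exact ⟨hk1, hk2⟩
    have := hrowOf_eq k x hxk
    rw [this]
    exact ⟨hkr, hxk⟩
  -- red / blue
  have hRedRow : ∀ k, Red k ⊆ Row k := by
    intro k x hx
    rw [hRed, mem_Ioc] at hx
    rw [hRow, mem_Ioc]
    exact ⟨hx.1, le_trans hx.2 (Nat.sub_le _ _)⟩
  have hBlueRow : ∀ k, Blue k ⊆ Row k := by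
    intro k
    rw [hBlue]
    exact Finset.sdiff_subset
  have hRedBlue_same : ∀ k, ∀ x ∈ Red k, ∀ y ∈ Blue k, x < y := by
    intro k x hx y hy
    rw [hBlue, mem_sdiff] at hy
    have hyr := hy.1
    rw [hRow, mem_Ioc] at hyr
    rw [hRed, mem_Ioc] at hx hy
    push_neg at hy
    have := hy.2 hyr.1
    omega
  have hRB : ∀ k k' x, x ∈ Red k → x ∈ Blue k' → False := by
    intro k k' x hx hy
    by_cases h : k = k'
    · subst h
      rw [hBlue, mem_sdiff] at hy
      exact hy.2 hx
    · exact hRowdisj h x (hRedRow k hx) (hBlueRow k' hy)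
  -- l and m
  have hl_mem : ∀ i ∈ Finset.Icc 1 s, ∃ k < r, l i ∈ Red k := by
    intro i hi
    have : l i ∈ (Finset.range r).biUnion Red := hlrange ▸ Finset.mem_image_of_mem l hi
    simpa only [mem_biUnion, mem_range] using this
  have hm_mem : ∀ i ∈ Finset.Icc 1 (n - s), ∃ k < r, m i ∈ Blue k := by
    intro i hi
    have : m i ∈ (Finset.range r).biUnion Blue := hmrange ▸ Finset.mem_image_of_mem m hi
    simpa only [mem_biUnion, mem_range] using this
  -- rowOf of blue/red images
  have hl_inj : ∀ i ∈ Finset.Icc 1 s, ∀ j ∈ Finset.Icc 1 s, l i = l j → i = j := by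
    intro i hi j hj hij
    rw [mem_Icc] at hi hj
    rcases lt_trichotomy i j with h | h | h
    · have := hlmono i j hi.1 h hj.2; omega
    · exact h
    · have := hlmono j i hj.1 h hi.2; omega
  have hσinj : ∀ a ∈ Finset.Icc 1 n, ∀ b ∈ Finset.Icc 1 n, σinv a = σinv b → a = b := by
    intro a ha b hb hab
    rw [mem_Icc] at ha hb
    rw [hσinv, hσinv] at hab
    by_cases h1 : a ≤ s <;> by_cases h2 : b ≤ s <;> simp only [h1, h2, if_true, if_false,
      if_pos, if_neg] at hab
    · exact hl_inj a (by rw [mem_Icc]; omega) b (by rw [mem_Icc]; omega) hab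
    · exfalso
      obtain ⟨k, _, hk⟩ := hl_mem a (by rw [mem_Icc]; omega)
      obtain ⟨k', _, hk'⟩ := hm_mem (b - s) (by rw [mem_Icc]; omega)
      rw [hab] at hk
      exact hRB k k' _ hk hk'
    · exfalso
      obtain ⟨k, _, hk⟩ := hl_mem b (by rw [mem_Icc]; omega)
      obtain ⟨k', _, hk'⟩ := hm_mem (a - s) (by rw [mem_Icc]; omega)
      rw [← hab] at hk
      exact hRB k k' _ hk hk'
    · have := hminj (a - s) (by rw [mem_Icc]; omega) (b - s) (by rw [mem_Icc]; omega) hab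
      omega
  -- the intermediate set S
  set S : Finset (ℕ × ℕ) := ((Finset.Icc 1 n) ×ˢ (Finset.Icc 1 n)).filter
      (fun p : ℕ × ℕ => p.2 ∈ Blue (rowOf p.2) ∧ rowOf p.2 < rowOf p.1) with hSdef
  have step1 : (((Finset.Icc 1 n) ×ˢ (Finset.Icc 1 n)).filter
        (fun p : ℕ × ℕ => p.1 < p.2 ∧ σinv p.2 < σinv p.1)).card = S.card := by
    apply Finset.card_nbij (fun p => (σinv p.1, σinv p.2))
    · -- maps into S
      rintro ⟨i, j⟩ hp
      rw [mem_coe, mem_filter, mem_product, mem_Icc, mem_Icc] at hp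
      obtain ⟨⟨hi, hj⟩, hij, hinv⟩ := hp
      simp only [mem_coe] at hi hj hij hinv ⊢
      by_cases h1 : i ≤ s <;> by_cases h2 : j ≤ s
      · -- both red: contradiction
        exfalso
        rw [hσinv, hσinv, if_pos h1, if_pos h2] at hinv
        have := hlmono i j hi.1 hij h2
        omega
      · -- i red index, j blue index
        rw [hσinv, hσinv, if_pos h1, if_neg h2] at hinv ⊢
        push_neg at h2
        obtain ⟨k, hkr, hk⟩ := hl_mem i (by rw [mem_Icc]; omega)
        obtain ⟨k', hkr', hk'⟩ := hm_mem (j - s) (by rw [mem_Icc]; omega)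
        have hrx : rowOf (l i) = k := hrowOf_eq k _ (hRedRow k hk)
        have hry : rowOf (m (j - s)) = k' := hrowOf_eq k' _ (hBlueRow k' hk')
        rw [mem_filter, mem_product]
        refine ⟨⟨hRowSub k (hRedRow k hk), hRowSub k' (hBlueRow k' hk')⟩, ?_, ?_⟩
        · rw [hry]; exact hk'
        · rw [hrx, hry]
          rcases lt_trichotomy k' k with h | h | h
          · exact h
          · exfalso
            rw [h] at hk'
            have := hRedBlue_same k _ hk _ hk'
            omega
          · exfalso
            have := hRowlt h _ (hRedRow k hk) _ (hBlueRow k' hk')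
            omega
      · omega
      · -- both blue
        push_neg at h1
        rw [hσinv, hσinv, if_neg (by omega : ¬ i ≤ s), if_neg (by omega : ¬ j ≤ s)] at hinv ⊢
        have hiB : i - s ∈ Finset.Icc 1 (n - s) := by rw [mem_Icc]; omega
        have hjB : j - s ∈ Finset.Icc 1 (n - s) := by rw [mem_Icc]; omega
        obtain ⟨k, hkr, hk⟩ := hm_mem (i - s) hiB
        obtain ⟨k', hkr', hk'⟩ := hm_mem (j - s) hjB
        have hrx : rowOf (m (i - s)) = k := hrowOf_eq k _ (hBlueRow k hk)
        have hry : rowOf (m (j - s)) = k' := hrowOf_eq k' _ (hBlueRow k' hk')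
        have hlt := (hmorder _ hiB _ hjB).1 (by omega)
        rw [mem_filter, mem_product]
        refine ⟨⟨hRowSub k (hBlueRow k hk), hRowSub k' (hBlueRow k' hk')⟩, ?_, ?_⟩
        · rw [hry]; exact hk'
        · rcases hlt with h | ⟨h, hmm⟩
          · exact h
          · omega
    · -- injective
      rintro ⟨i₁, j₁⟩ hp₁ ⟨i₂, j₂⟩ hp₂ heq
      simp only [Finset.coe_filter, Set.mem_setOf_eq, mem_product, mem_coe] at hp₁ hp₂
      rw [Prod.mk.injEq] at heq
      have e1 := hσinj i₁ hp₁.1.1 i₂ hp₂.1.1 heq.1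
      have e2 := hσinj j₁ hp₁.1.2 j₂ hp₂.1.2 heq.2
      rw [Prod.mk.injEq]
      exact ⟨e1, e2⟩
    · -- surjective
      rintro ⟨x, y⟩ hxy
      simp only [hSdef, coe_filter, Set.mem_setOf_eq, mem_product] at hxy
      obtain ⟨⟨hx, hy⟩, hyB, hlt⟩ := hxy
      -- y blue: get preimage j'
      have hyBU : y ∈ (Finset.range r).biUnion Blue := by
        rw [mem_biUnion]
        exact ⟨rowOf y, mem_range.2 (hrow_mem y hy).1, hyB⟩
      rw [← hmrange, mem_image] at hyBU
      obtain ⟨j', hj', hjy⟩ := hyBU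
      rw [mem_Icc] at hj'
      -- x : red or blue
      have hxmem := hrow_mem x hx
      have hxRow := hxmem.2
      have hxsplit : x ∈ Red (rowOf x) ∨ x ∈ Blue (rowOf x) := by
        by_cases h : x ∈ Red (rowOf x)
        · exact Or.inl h
        · exact Or.inr (by rw [hBlue, mem_sdiff]; exact ⟨hxRow, h⟩)
      have hyx : y < x := by
        refine hRowlt hlt y ?_ x hxRow
        exact hBlueRow _ hyB
      rcases hxsplit with hred | hblue
      · -- x red: x = l i
        have hxRU : x ∈ (Finset.range r).biUnion Red := by
          rw [mem_biUnion]
          exact ⟨rowOf x, mem_range.2 hxmem.1, hred⟩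
        rw [← hlrange, mem_image] at hxRU
        obtain ⟨i, hi, hix⟩ := hxRU
        rw [mem_Icc] at hi
        refine ⟨(i, j' + s), ?_, ?_⟩
        · simp only [Set.mem_setOf_eq, coe_filter, mem_product, mem_coe, mem_Icc]
          refine ⟨⟨⟨hi.1, by omega⟩, ⟨by omega, by omega⟩⟩, by omega, ?_⟩
          rw [hσinv, hσinv, if_pos hi.2, if_neg (by omega : ¬ j' + s ≤ s),
            Nat.add_sub_cancel, hjy, hix]
          exact hyx
        · simp only [Prod.mk.injEq]
          constructor
          · rw [hσinv, if_pos hi.2]; exact hix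
          · rw [hσinv, if_neg (by omega : ¬ j' + s ≤ s), Nat.add_sub_cancel]; exact hjy
      · -- x blue: x = m i'
        have hxBU : x ∈ (Finset.range r).biUnion Blue := by
          rw [mem_biUnion]
          exact ⟨rowOf x, mem_range.2 hxmem.1, hblue⟩
        rw [← hmrange, mem_image] at hxBU
        obtain ⟨i', hi', hix⟩ := hxBU
        have hi'2 := hi'
        rw [mem_Icc] at hi'2
        have hij : i' < j' := by
          refine (hmorder i' hi' j' (by rw [mem_Icc]; omega)).2 ?_
          left
          rw [hjy, hix]
          exact hlt
        refine ⟨(i' + s, j' + s), ?_, ?_⟩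
        · simp only [Set.mem_setOf_eq, coe_filter, mem_product, mem_coe, mem_Icc]
          refine ⟨⟨⟨by omega, by omega⟩, ⟨by omega, by omega⟩⟩, by omega, ?_⟩
          rw [hσinv, hσinv, if_neg (by omega : ¬ i' + s ≤ s), if_neg (by omega : ¬ j' + s ≤ s),
            Nat.add_sub_cancel, Nat.add_sub_cancel, hjy, hix]
          exact hyx
        · simp only [Prod.mk.injEq]
          constructor
          · rw [hσinv, if_neg (by omega : ¬ i' + s ≤ s), Nat.add_sub_cancel]; exact hix
          · rw [hσinv, if_neg (by omega : ¬ j' + s ≤ s), Nat.add_sub_cancel]; exact hjy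
  -- step 2 : S as a disjoint union
  have step2 : S = ((Finset.range r ×ˢ Finset.range r).filter (fun p => p.2 < p.1)).biUnion
      (fun p => (Row p.1) ×ˢ (Blue p.2)) := by
    ext ⟨x, y⟩
    simp only [hSdef, mem_filter, mem_product, mem_biUnion, mem_range, Prod.exists]
    constructor
    · rintro ⟨⟨hx, hy⟩, hyB, hlt⟩
      have hxm := hrow_mem x hx
      have hym := hrow_mem y hy
      exact ⟨rowOf x, rowOf y, ⟨⟨hxm.1, hym.1⟩, hlt⟩, hxm.2, hyB⟩
    · rintro ⟨k, k', ⟨⟨hkr, hkr'⟩, hkk⟩, hxk, hyk⟩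
      have hy' : rowOf y = k' := hrowOf_eq k' y (hBlueRow k' hyk)
      have hx' : rowOf x = k := hrowOf_eq k x hxk
      refine ⟨⟨hRowSub k hxk, hRowSub k' (hBlueRow k' hyk)⟩, ?_, ?_⟩
      · rw [hy']; exact hyk
      · rw [hx', hy']; exact hkk
  rw [step1, step2, Finset.card_biUnion]
  · apply Finset.sum_congr rfl
    intro p _
    rw [Finset.card_product]
  · rintro ⟨k₁, k₁'⟩ h₁ ⟨k₂, k₂'⟩ h₂ hne
    simp only [Finset.disjoint_left]
    rintro ⟨x, y⟩ hxy₁ hxy₂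
    rw [mem_product] at hxy₁ hxy₂
    by_cases hk : k₁ = k₂
    · have hk' : k₁' ≠ k₂' := by
        intro h; exact hne (by rw [Prod.mk.injEq]; exact ⟨hk, h⟩)
      exact hRowdisj hk' y (hBlueRow _ hxy₁.2) (hBlueRow _ hxy₂.2)
    · exact hRowdisj hk x hxy₁.1 hxy₂.1
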